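/- Let p be a prime and A a ℤ/pℤ-graded commutative ring with components A_i such that A_i·A_{p−i} = A_0 for each i = 1, …, p−1. Let K be a homogeneous ideal of A, and let K_0 = K ∩ A_0, an ideal of the subring A_0. Then for every integer n ≥ 1, the degree-0 component of K^n equals the n-th power of K_0: K^n ∩ A_0 = K_0^n. -/

import Mathlib

open DirectSum

private lemma key_mul_mem {A : Type*} [CommRing A] {p : ℕ}
    (𝒜 : ZMod p → Submodule ℤ A) [GradedRing 𝒜]
    (hone : ∀ d : ZMod p, (1 : A) ∈ (𝒜 (-d) * 𝒜 d : Submodule ℤ A))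
    (I J : Ideal A) {c : ZMod p} {k l : A}
    (hkI : k ∈ I) (hkc : k ∈ 𝒜 c) (hlJ : l ∈ J) (hlc : l ∈ 𝒜 (-c)) :
    k * l ∈ ((I.restrictScalars ℤ ⊓ 𝒜 0) * (J.restrictScalars ℤ ⊓ 𝒜 0) : Submodule ℤ A) := by
  have H : ∀ z ∈ (𝒜 (-c) * 𝒜 c : Submodule ℤ A),
      k * z * l ∈ ((I.restrictScalars ℤ ⊓ 𝒜 0) * (J.restrictScalars ℤ ⊓ 𝒜 0) :
        Submodule ℤ A) := by
    intro z hz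
    refine Submodule.mul_induction_on hz ?_ ?_
    · intro u hu v hv
      have e : k * (u * v) * l = (k * u) * (v * l) := by ring
      rw [e]
      refine Submodule.mul_mem_mul (Submodule.mem_inf.mpr ⟨I.mul_mem_right u hkI, ?_⟩)
        (Submodule.mem_inf.mpr ⟨J.mul_mem_left v hlJ, ?_⟩)
      · have := SetLike.mul_mem_graded hkc hu
        simpa using this
      · have := SetLike.mul_mem_graded hv hlc
        simpa using this
    · intro x y hx hy
      have e : k * (x + y) * l = k * x * l + k * y * l := by ring
      rw [e]
      exact add_mem hx hy
  have := H 1 (hone c)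
  simpa using this

private lemma key_proj_mem {A : Type*} [CommRing A] {p : ℕ}
    (𝒜 : ZMod p → Submodule ℤ A) [GradedRing 𝒜]
    (hone : ∀ d : ZMod p, (1 : A) ∈ (𝒜 (-d) * 𝒜 d : Submodule ℤ A))
    (I J : Ideal A) (hI : I.IsHomogeneous 𝒜) (hJ : J.IsHomogeneous 𝒜) :
    ∀ x ∈ I * J, ((decompose 𝒜 x 0 : 𝒜 0) : A) ∈
      ((I.restrictScalars ℤ ⊓ 𝒜 0) * (J.restrictScalars ℤ ⊓ 𝒜 0) : Submodule ℤ A) := by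
  intro x hx
  refine Submodule.mul_induction_on hx ?_ ?_
  · intro a haI b hbJ
    classical
    rw [← GradedRing.proj_apply]
    rw [show a * b = ∑ i ∈ (decompose 𝒜 a).support, ∑ j ∈ (decompose 𝒜 b).support,
        ((decompose 𝒜 a i : A) * (decompose 𝒜 b j : A)) from by
      conv_lhs => rw [← sum_support_decompose 𝒜 a, ← sum_support_decompose 𝒜 b]
      rw [Finset.sum_mul_sum]]
    rw [map_sum]
    refine Submodule.sum_mem _ fun i _ => ?_
    rw [map_sum]
    refine Submodule.sum_mem _ fun j _ => ?_
    by_cases hij : i + j = 0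
    · have hmem : (decompose 𝒜 a i : A) * (decompose 𝒜 b j : A) ∈ 𝒜 0 := by
        rw [← hij]; exact SetLike.mul_mem_graded (SetLike.coe_mem _) (SetLike.coe_mem _)
      rw [GradedRing.proj_apply, decompose_of_mem_same 𝒜 hmem]
      have hj : j = -i := eq_neg_of_add_eq_zero_right hij
      exact key_mul_mem 𝒜 hone I J (hI i haI) (SetLike.coe_mem _) (hJ j hbJ)
        (hj ▸ SetLike.coe_mem _)
    · have hmem : (decompose 𝒜 a i : A) * (decompose 𝒜 b j : A) ∈ 𝒜 (i + j) :=
        SetLike.mul_mem_graded (SetLike.coe_mem _) (SetLike.coe_mem _)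
      rw [GradedRing.proj_apply, decompose_of_mem_ne 𝒜 hmem hij]
      exact zero_mem _
  · intro x y hx hy
    rw [decompose_add]
    push_cast
    exact add_mem hx hy

private lemma pow_isHomogeneous {A : Type*} [CommRing A] {p : ℕ}
    (𝒜 : ZMod p → Submodule ℤ A) [GradedRing 𝒜] {K : Ideal A}
    (hK : Ideal.IsHomogeneous 𝒜 K) : ∀ n, 1 ≤ n → Ideal.IsHomogeneous 𝒜 (K ^ n) := by
  intro n hn
  induction n with
  | zero => omega
  | succ m ih =>
    rcases Nat.eq_or_lt_of_le hn with h1 | h1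
    · simpa [← h1] using hK
    · rw [pow_succ]
      exact (ih (by omega)).mul hK

/-- For a `ℤ/pℤ`-graded commutative ring `A` with `𝒜 i · 𝒜 (p-i) = 𝒜 0` for `i = 1, …, p-1`
and a homogeneous ideal `K ⊆ A`, the degree-zero component of `K^n` (`n ≥ 1`) equals the
`n`-th power of the ideal `K₀ = K ∩ 𝒜 0` of the subring `𝒜 0`. -/
theorem degree_zero_component_of_pow_homogeneous_ideal
    {A : Type*} [CommRing A] {p : ℕ} (hp : p.Prime)
    (𝒜 : ZMod p → Submodule ℤ A) [GradedRing 𝒜]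
    (h : ∀ i ∈ Finset.Icc 1 (p - 1),
      𝒜 (i : ZMod p) * 𝒜 ((p - i : ℕ) : ZMod p) = 𝒜 (0 : ZMod p))
    (K : Ideal A) (hK : Ideal.IsHomogeneous 𝒜 K) (n : ℕ) (hn : 1 ≤ n) :
    Ideal.comap (SetLike.GradeZero.subring 𝒜).subtype (K ^ n)
      = (Ideal.comap (SetLike.GradeZero.subring 𝒜).subtype K) ^ n := by
  haveI : NeZero p := ⟨hp.ne_zero⟩
  have hone : ∀ d : ZMod p, (1 : A) ∈ (𝒜 (-d) * 𝒜 d : Submodule ℤ A) := by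
    intro d
    by_cases hd : d = 0
    · subst hd
      have := Submodule.mul_mem_mul (M := 𝒜 (-(0 : ZMod p))) (N := 𝒜 (0 : ZMod p))
        (by simpa using SetLike.one_mem_graded 𝒜) (SetLike.one_mem_graded 𝒜)
      simpa using this
    · set i := d.val with hi
      have h1 : 1 ≤ i := Nat.one_le_iff_ne_zero.mpr (by
        simpa [hi, ZMod.val_eq_zero] using hd)
      have h2 : i ≤ p - 1 := Nat.le_sub_one_of_lt (ZMod.val_lt d)
      have hcast : (i : ZMod p) = d := by simp [hi, ZMod.natCast_val, ZMod.cast_id]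
      have hcast2 : ((p - i : ℕ) : ZMod p) = -d := by
        have hle : i ≤ p := le_of_lt (ZMod.val_lt d)
        rw [Nat.cast_sub hle, ZMod.natCast_self, hcast, zero_sub]
      have := h i (Finset.mem_Icc.mpr ⟨h1, h2⟩)
      rw [hcast, hcast2, mul_comm] at this
      rw [this]
      exact SetLike.one_mem_graded 𝒜
  have claim : ∀ m, 1 ≤ m → ∀ x : A, ∀ hx0 : x ∈ SetLike.GradeZero.subring 𝒜,
      x ∈ K ^ m → (⟨x, hx0⟩ : SetLike.GradeZero.subring 𝒜) ∈
        (Ideal.comap (SetLike.GradeZero.subring 𝒜).subtype K) ^ m := by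
    intro m hm
    induction m with
    | zero => omega
    | succ k ih =>
      rcases Nat.eq_or_lt_of_le hm with h1 | h1
      · intro x hx0 hx
        rw [← h1] at hx ⊢
        rw [pow_one] at hx ⊢
        exact hx
      · have hk : 1 ≤ k := by omega
        intro x hx0 hx
        rw [pow_succ, mul_comm] at hx
        have hx𝒜 : x ∈ 𝒜 0 := hx0
        have hd : ((decompose 𝒜 x 0 : 𝒜 0) : A) = x := decompose_of_mem_same 𝒜 hx𝒜
        have hmem := key_proj_mem 𝒜 hone K (K ^ k) hK (pow_isHomogeneous 𝒜 hK k hk) x hx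
        rw [hd] at hmem
        rw [pow_succ, mul_comm]
        have hmap : ∀ y ∈ ((K.restrictScalars ℤ ⊓ 𝒜 0) *
            ((K ^ k).restrictScalars ℤ ⊓ 𝒜 0) : Submodule ℤ A),
            ∃ t : SetLike.GradeZero.subring 𝒜,
              t ∈ (Ideal.comap (SetLike.GradeZero.subring 𝒜).subtype K) *
                (Ideal.comap (SetLike.GradeZero.subring 𝒜).subtype K) ^ k ∧ (t : A) = y := by
          intro y hy
          refine Submodule.mul_induction_on hy ?_ ?_
          · intro a ha b hb
            have ha' := Submodule.mem_inf.mp ha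
            have hb' := Submodule.mem_inf.mp hb
            refine ⟨(⟨a, ha'.2⟩ : SetLike.GradeZero.subring 𝒜) * ⟨b, hb'.2⟩, ?_, rfl⟩
            exact Submodule.mul_mem_mul ha'.1 (ih hk b hb'.2 hb'.1)
          · rintro u v ⟨t, ht, rfl⟩ ⟨s, hs, rfl⟩
            exact ⟨t + s, add_mem ht hs, rfl⟩
        obtain ⟨t, ht, hteq⟩ := hmap x hmem
        have : (⟨x, hx0⟩ : SetLike.GradeZero.subring 𝒜) = t := Subtype.ext hteq.symm
        rw [this]
        exact ht
  apply le_antisymm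
  · intro x hx
    have := claim n hn x.1 x.2 hx
    simpa using this
  · have : Ideal.map (SetLike.GradeZero.subring 𝒜).subtype
        ((Ideal.comap (SetLike.GradeZero.subring 𝒜).subtype K) ^ n) ≤ K ^ n := by
      rw [Ideal.map_pow]
      exact Ideal.pow_right_mono Ideal.map_comap_le n
    exact Ideal.map_le_iff_le_comap.mp this
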